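/- Every piecewise syndetic subset of ω contains arbitrarily long arithmetic progressions; consequently the van der Waerden ideal W is contained in the Brown ideal B. -/

import Mathlib

open Classical Filter

/-- A set of naturals is thick if it contains arbitrarily long intervals. -/
def Thick (T : Set ℕ) : Prop := ∀ p : ℕ, ∃ n : ℕ, ∀ k ≤ p, n + k ∈ T

/-- A set of naturals is syndetic if it has gaps of bounded length. -/
def Syndetic (S : Set ℕ) : Prop := ∃ p : ℕ, ∀ a : ℕ, ∃ k ≤ p, a + k ∈ S

/-- Piecewise syndetic: intersection of a thick set and a syndetic set. -/
def PiecewiseSyndetic (P : Set ℕ) : Prop :=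
  ∃ T S : Set ℕ, Thick T ∧ Syndetic S ∧ P = T ∩ S

/-- `A` contains an arithmetic progression of length `n`. -/
def HasAPSet (A : Set ℕ) (n : ℕ) : Prop :=
  ∃ a r : ℕ, 0 < r ∧ ∀ i < n, a + i * r ∈ A

/-- The standard ultrametric on Cantor space `2^ω`:
`ρ(x,y) = 2^{-min{i : x i ≠ y i}}` for `x ≠ y`, and `0` otherwise. -/
noncomputable def rho (x y : ℕ → Bool) : ℝ :=
  if h : x = y then 0
  else (2 : ℝ) ^ (-(Nat.find (Function.ne_iff.mp h) : ℤ))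

/-- Open ball in Cantor space with respect to `rho`. -/
def ball (x : ℕ → Bool) (ε : ℝ) : Set (ℕ → Bool) := {y | rho y x < ε}

/-- Metric porosity in Cantor space. -/
def Porous (E : Set (ℕ → Bool)) : Prop :=
  ∃ α : ℝ, 0 < α ∧ α < 1 ∧ ∃ ε₀ : ℝ, 0 < ε₀ ∧
    ∀ ε : ℝ, 0 < ε → ε ≤ ε₀ → ∀ x : ℕ → Bool,
      ∃ y : ℕ → Bool, ball y (α * ε) ⊆ ball x ε \ E

/-- σ-porous: covered by countably many porous sets. -/
def SigmaPorous (E : Set (ℕ → Bool)) : Prop :=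
  ∃ F : ℕ → Set (ℕ → Bool), (∀ n, Porous (F n)) ∧ E ⊆ ⋃ n, F n

/-- The basic clopen cylinder `[s]` of all extensions of a finite string `s`. -/
def Cyl (s : List Bool) : Set (ℕ → Bool) := {x | ∀ i < s.length, x i = s.getD i false}

/-- A point of Cantor space, viewed as a subset of ω, is thick. -/
def ThickB (x : ℕ → Bool) : Prop := ∀ p : ℕ, ∃ n : ℕ, ∀ k ≤ p, x (n + k) = true

/-- `x`, viewed as a subset of ω, contains an arithmetic progression of length `n`. -/
def HasAP (x : ℕ → Bool) (n : ℕ) : Prop :=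
  ∃ a r : ℕ, 0 < r ∧ ∀ i < n, x (a + i * r) = true

/-- `E_n`: points of Cantor space with no arithmetic progression of length `n`. -/
def ESet (n : ℕ) : Set (ℕ → Bool) := {x | ¬ HasAP x n}

/-- The van der Waerden ideal, as a subset of Cantor space. -/
def vdW : Set (ℕ → Bool) := ⋃ n, ESet n

/-- Ideal on ω, with members represented as points of Cantor space. -/
def IsIdealB (I : Set (ℕ → Bool)) : Prop :=
  (fun _ => false) ∈ I ∧
  (∀ x y : ℕ → Bool, (∀ n, x n = true → y n = true) → y ∈ I → x ∈ I) ∧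
  (∀ x y : ℕ → Bool, x ∈ I → y ∈ I → (fun n => x n || y n) ∈ I)

/-- `n`-porosity: every cylinder has a depth-`n` subcylinder missing `A`. -/
def NPorous (n : ℕ) (A : Set (ℕ → Bool)) : Prop :=
  ∀ s : List Bool, ∃ t : List Bool, t.length = n ∧ Cyl (s ++ t) ∩ A = ∅

/-- The length-`n` initial segment of `x` as a finite string. -/
def initSeg (x : ℕ → Bool) (n : ℕ) : List Bool := (List.range n).map x

/-- `S_n(A)`: the maximal size of `A ∩ {m, …, m+n}` over all `m`. -/
noncomputable def Sn (A : Set ℕ) (n : ℕ) : ℕ :=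
  sSup {k : ℕ | ∃ m : ℕ, (A ∩ Set.Icc m (m + n)).ncard = k}

/-- `A = {n², n²+1 : n ≥ 1}`. -/
def ASet : Set ℕ := {k | ∃ n : ℕ, 1 ≤ n ∧ (k = n ^ 2 ∨ k = n ^ 2 + 1)}

/-- `P = {x ∈ 2^ω : x(k) = 0 for all k ∉ A}`. -/
def CantorP : Set (ℕ → Bool) := {x | ∀ k, k ∉ ASet → x k = false}

/-- Every piecewise syndetic set contains arbitrarily long
arithmetic progressions; hence the van der Waerden ideal is contained in
the Brown ideal. -/
theorem vdW_fin (len r : ℕ) : ∃ N : ℕ, ∀ c : ℕ → Fin r, ∃ a d : ℕ, 0 < d ∧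
    a + len * d ≤ N ∧ ∃ v, ∀ i < len, c (a + i * d) = v := by
  by_contra h
  push_neg at h
  choose c hc using h
  rcases Nat.eq_zero_or_pos r with hr | hr
  · exact (hr ▸ (c 0 0) : Fin 0).elim0
  -- build limit coloring along an ultrafilter
  set U : Ultrafilter ℕ := Ultrafilter.of atTop with hU
  have hpure : ∀ m : ℕ, ∃ v : Fin r, {N | c N m = v} ∈ U := by
    intro m
    obtain ⟨v, hv⟩ := (Ultrafilter.map (fun N => c N m) U).eq_pure_of_finite
    exact ⟨v, by
      have : {v} ∈ Ultrafilter.map (fun N => c N m) U := by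
        rw [hv]; exact Filter.mem_pure.2 rfl
      simpa [Ultrafilter.mem_map, Set.preimage, Set.mem_singleton_iff] using this⟩
  choose C hC using hpure
  obtain ⟨d, hd, b, v, hmono⟩ :=
    Combinatorics.exists_mono_homothetic_copy (Finset.range len) C
  -- find a witness N
  have hmem : {N | ∀ i < len, c N (b + i * d) = v} ∈ U := by
    have : ∀ᶠ N in (U : Filter ℕ), ∀ i ∈ Set.Iio len, c N (b + i * d) = v := by
      rw [eventually_all_finite (Set.finite_Iio len)]
      intro i hi
      have h1 : C (d • i + b) = v := hmono i (Finset.mem_range.2 hi)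
      have : C (b + i * d) = v := by
        rw [← h1]; congr 1; simp [smul_eq_mul]; ring
      filter_upwards [hC (b + i * d)] with N hN using hN.trans this
    have h2 : ∀ᶠ N in (U : Filter ℕ), ∀ i < len, c N (b + i * d) = v := by
      simpa [Set.mem_Iio] using this
    exact h2
  have hmem2 : {N | b + len * d ≤ N} ∈ U :=
    (Ultrafilter.of_le atTop) (eventually_ge_atTop (b + len * d))
  obtain ⟨N, hN1, hN2⟩ := Ultrafilter.nonempty_of_mem (Filter.inter_mem hmem hmem2)
  obtain ⟨i, hi, hne⟩ := hc N b d hd hN2 v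
  exact hne (hN1 i hi)

theorem piecewiseSyndetic_hasAP' :
    ∀ P : Set ℕ, (∃ T S : Set ℕ, (∀ p : ℕ, ∃ n : ℕ, ∀ k ≤ p, n + k ∈ T) ∧
      (∃ p : ℕ, ∀ a : ℕ, ∃ k ≤ p, a + k ∈ S) ∧ P = T ∩ S) →
    ∀ n : ℕ, ∃ a r : ℕ, 0 < r ∧ ∀ i < n, a + i * r ∈ P := by
  rintro P ⟨T, S, hT, ⟨p, hS⟩, rfl⟩ n
  obtain ⟨N, hN⟩ := vdW_fin n (p + 1)
  obtain ⟨n₀, hn₀⟩ := hT (N + p)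
  have exS : ∀ m : ℕ, ∃ k : ℕ, n₀ + m + k ∈ S := fun m =>
    (hS (n₀ + m)).imp fun k hk => hk.2
  have findle : ∀ m, Nat.find (exS m) ≤ p := by
    intro m
    obtain ⟨k, hk, hkS⟩ := hS (n₀ + m)
    exact le_trans (Nat.find_le hkS) hk
  set c : ℕ → Fin (p + 1) := fun m => ⟨Nat.find (exS m), Nat.lt_succ_of_le (findle m)⟩
    with hc
  obtain ⟨a, d, hd, hle, v, hv⟩ := hN c
  refine ⟨n₀ + a + v.val, d, hd, fun i hi => ?_⟩
  have hkey : Nat.find (exS (a + i * d)) = v.val := by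
    have := hv i hi
    simpa [hc, Fin.ext_iff] using this
  have hin : n₀ + a + v.val + i * d = n₀ + (a + i * d) + v.val := by ring
  constructor
  · -- in T
    have hbound : a + i * d + v.val ≤ N + p := by
      have h1 : a + i * d ≤ N := le_trans (by nlinarith [Nat.le_of_lt hi]) hle
      have h2 : v.val ≤ p := hkey ▸ findle (a + i * d)
      omega
    have := hn₀ (a + i * d + v.val) hbound
    rw [hin]
    simpa [add_assoc] using this
  · -- in S
    rw [hin, ← hkey]
    exact Nat.find_spec (exS (a + i * d))

theorem piecewiseSyndetic_hasAP_and_vdW_subset_brown :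
    (∀ P : Set ℕ, PiecewiseSyndetic P → ∀ n : ℕ, HasAPSet P n) ∧
    (∀ A : Set ℕ, (∃ n : ℕ, ¬ HasAPSet A n) → ¬ PiecewiseSyndetic A) := by
  have H : ∀ P : Set ℕ, PiecewiseSyndetic P → ∀ n : ℕ, HasAPSet P n := by
    rintro P ⟨T, S, hT, hS, hPeq⟩ n
    exact piecewiseSyndetic_hasAP' P ⟨T, S, hT, hS, hPeq⟩ n
  exact ⟨H, fun A ⟨n, hn⟩ hPS => hn (H A hPS n)⟩
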